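/- For every finite simple graph G, 2α(G) ≤ |corona(G)| + |core(G)| ≤ 2(|V(G)| − μ(G)). -/

import Mathlib

open Set

variable {V : Type*}

/-- `S` is an independent set of `G`. -/
def IndepSet (G : SimpleGraph V) (S : Set V) : Prop :=
  ∀ x ∈ S, ∀ y ∈ S, ¬ G.Adj x y

/-- The independence number `α(G)`. -/
noncomputable def alpha (G : SimpleGraph V) : ℕ :=
  sSup {n | ∃ S : Set V, IndepSet G S ∧ S.ncard = n}

/-- `S` is a maximum independent set of `G`. -/
def MaxIndep (G : SimpleGraph V) (S : Set V) : Prop :=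
  IndepSet G S ∧ S.ncard = alpha G

/-- `Ω(G)`, the family of all maximum independent sets. -/
def Omega (G : SimpleGraph V) : Set (Set V) := {S | MaxIndep G S}

/-- `core(G)`, the intersection of all maximum independent sets. -/
def core (G : SimpleGraph V) : Set V := ⋂₀ Omega G

/-- `corona(G)`, the union of all maximum independent sets. -/
def corona (G : SimpleGraph V) : Set V := ⋃₀ Omega G

/-- The matching number `μ(G)`. -/
noncomputable def matchNum (G : SimpleGraph V) : ℕ :=
  sSup {n | ∃ M : G.Subgraph, M.IsMatching ∧ M.edgeSet.ncard = n}

/-- A matching from `X` into `Y`: an injection `f` on `X` into `Y` such that each `x ∈ X`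
is adjacent to `f x` and the edges `{x, f x}` are pairwise disjoint. -/
def MatchingFrom (G : SimpleGraph V) (X Y : Set V) : Prop :=
  ∃ f : V → V, Set.InjOn f X ∧ (∀ x ∈ X, f x ∈ Y ∧ G.Adj x (f x)) ∧
    ∀ x ∈ X, ∀ y ∈ X, x ≠ y → f x ≠ y

section aux

set_option linter.unusedSectionVars false

variable [Fintype V] (G : SimpleGraph V)

lemma alpha_bddAbove : BddAbove {n | ∃ S : Set V, IndepSet G S ∧ S.ncard = n} := by
  refine ⟨Fintype.card V, ?_⟩
  rintro n ⟨S, -, rfl⟩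
  calc S.ncard ≤ (univ : Set V).ncard := ncard_le_ncard (subset_univ S) (toFinite _)
    _ = Fintype.card V := by simp [ncard_univ, Nat.card_eq_fintype_card]

lemma ncard_le_alpha {S : Set V} (h : IndepSet G S) : S.ncard ≤ alpha G :=
  le_csSup (alpha_bddAbove G) ⟨S, h, rfl⟩

lemma omega_nonempty : (Omega G).Nonempty := by
  have hne : {n | ∃ S : Set V, IndepSet G S ∧ S.ncard = n}.Nonempty :=
    ⟨0, ∅, fun x hx => absurd hx (notMem_empty x), ncard_empty _⟩
  obtain ⟨S, hS, hcard⟩ := Nat.sSup_mem hne (alpha_bddAbove G)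
  exact ⟨S, hS, hcard⟩

/-- Key induction: for any finite nonempty subfamily of `Omega`,
`2α ≤ |union| + |inter|`. -/
lemma two_alpha_le_family (F : Set (Set V)) (hfin : F.Finite) :
    F ⊆ Omega G → F.Nonempty → 2 * alpha G ≤ (⋃₀ F).ncard + (⋂₀ F).ncard := by
  refine Set.Finite.induction_on F hfin (fun _ hne => absurd hne (by simp)) ?_
  intro S F hSF hFfin ih hsub hne
  have hS : MaxIndep G S := hsub (mem_insert S F)
  rcases F.eq_empty_or_nonempty with rfl | hFne
  · simp only [sUnion_insert, sInter_insert, sUnion_empty, sInter_empty, union_empty,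
      inter_univ]
    rw [hS.2]; omega
  · have hsub' : F ⊆ Omega G := fun T hT => hsub (mem_insert_of_mem S hT)
    have IH := ih hsub' hFne
    set U := ⋃₀ F with hU
    set I := ⋂₀ F with hI
    obtain ⟨T₀, hT₀⟩ := hFne
    have hIU : I ⊆ U := fun x hx => ⟨T₀, hT₀, hx T₀ hT₀⟩
    have hWindep : IndepSet G (I ∪ (U ∩ S)) := by
      rintro x hx y hy hadj
      rcases hx with hx | ⟨⟨Tx, hTx, hxTx⟩, hxS⟩
      · rcases hy with hy | ⟨⟨Ty, hTy, hyTy⟩, hyS⟩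
        · exact (hsub' hT₀).1 x (hx T₀ hT₀) y (hy T₀ hT₀) hadj
        · exact (hsub' hTy).1 x (hx Ty hTy) y hyTy hadj
      · rcases hy with hy | ⟨⟨Ty, hTy, hyTy⟩, hyS⟩
        · exact (hsub' hTx).1 x hxTx y (hy Tx hTx) hadj
        · exact hS.1 x hxS y hyS hadj
    have hW : (I ∪ (U ∩ S)).ncard ≤ alpha G := ncard_le_alpha G hWindep
    have h1 : (S ∪ U).ncard + (S ∩ U).ncard = S.ncard + U.ncard :=
      ncard_union_add_ncard_inter S U (toFinite _) (toFinite _)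
    have h2 : (I ∪ (U ∩ S)).ncard + (I ∩ (U ∩ S)).ncard = I.ncard + (U ∩ S).ncard :=
      ncard_union_add_ncard_inter I (U ∩ S) (toFinite _) (toFinite _)
    have hIS : I ∩ (U ∩ S) = S ∩ I := by
      ext x; constructor
      · rintro ⟨hxI, -, hxS⟩; exact ⟨hxS, hxI⟩
      · rintro ⟨hxS, hxI⟩; exact ⟨hxI, hIU hxI, hxS⟩
    rw [hIS] at h2
    have hUS : S ∩ U = U ∩ S := inter_comm S U
    rw [hUS] at h1
    have hScard : S.ncard = alpha G := hS.2
    rw [sUnion_insert, sInter_insert, ← hU, ← hI]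
    omega

lemma two_alpha_le : 2 * alpha G ≤ (corona G).ncard + (core G).ncard :=
  two_alpha_le_family G (Omega G) (toFinite _) (fun _ h => h) (omega_nonempty G)

lemma no_adj_core_corona {x y : V} (hx : x ∈ core G) (hy : y ∈ corona G) : ¬ G.Adj x y := by
  obtain ⟨T, hT, hyT⟩ := hy
  exact hT.1 x (hx T hT) y hyT

lemma exists_max_matching :
    ∃ M : G.Subgraph, M.IsMatching ∧ M.edgeSet.ncard = matchNum G := by
  have hne : {n | ∃ M : G.Subgraph, M.IsMatching ∧ M.edgeSet.ncard = n}.Nonempty := by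
    refine ⟨0, ⊥, ?_, ?_⟩
    · intro v hv
      simp only [SimpleGraph.Subgraph.verts_bot, mem_empty_iff_false] at hv
    · simp [SimpleGraph.Subgraph.edgeSet_bot]
  have hbdd : BddAbove {n | ∃ M : G.Subgraph, M.IsMatching ∧ M.edgeSet.ncard = n} := by
    refine ⟨Nat.card (Sym2 V), ?_⟩
    rintro n ⟨M, -, rfl⟩
    calc M.edgeSet.ncard ≤ (univ : Set (Sym2 V)).ncard :=
          ncard_le_ncard (subset_univ _) (toFinite _)
      _ = Nat.card (Sym2 V) := ncard_univ _
  exact Nat.sSup_mem hne hbdd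

/-- For a matching, twice the number of edges is at most the number of vertices. -/
lemma two_mul_edges_le_verts (M : G.Subgraph) (hM : M.IsMatching) :
    2 * M.edgeSet.ncard ≤ M.verts.ncard := by
  classical
  have hout : ∀ e : Sym2 V, ∃ q : V × V, e = s(q.1, q.2) := by
    intro e
    induction e using Sym2.ind with
    | _ x y => exact ⟨(x, y), rfl⟩
  choose ep hep using hout
  set a : Sym2 V → V := fun e => (ep e).1 with ha
  set b : Sym2 V → V := fun e => (ep e).2 with hb
  have hadj : ∀ e ∈ M.edgeSet, M.Adj (a e) (b e) := by
    intro e he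
    rw [← SimpleGraph.Subgraph.mem_edgeSet, ← hep e]
    exact he
  have huniq : ∀ v w w', M.Adj v w → M.Adj v w' → w = w' := by
    intro v w w' h h'
    exact (hM (M.edge_vert h)).unique h h'
  have hne : ∀ e ∈ M.edgeSet, a e ≠ b e := fun e he => (M.adj_sub (hadj e he)).ne
  have hkey : ∀ e ∈ M.edgeSet, ∀ e' ∈ M.edgeSet, ∀ v,
      (v = a e ∨ v = b e) → (v = a e' ∨ v = b e') → e = e' := by
    rintro e he e' he' v (rfl | rfl) (h5 | h5)
    · have h6 : M.Adj (a e) (b e') := by rw [h5]; exact hadj e' he'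
      have hbb : b e = b e' := huniq _ _ _ (hadj e he) h6
      calc e = s(a e, b e) := hep e
        _ = s(a e', b e') := by rw [h5, hbb]
        _ = e' := (hep e').symm
    · have h6 : M.Adj (a e) (a e') := by rw [h5]; exact M.adj_symm (hadj e' he')
      have hbb : b e = a e' := huniq _ _ _ (hadj e he) h6
      calc e = s(a e, b e) := hep e
        _ = s(b e', a e') := by rw [h5, hbb]
        _ = s(a e', b e') := Sym2.eq_swap
        _ = e' := (hep e').symm
    · have h6 : M.Adj (b e) (b e') := by rw [h5]; exact hadj e' he'
      have hbb : a e = b e' := huniq _ _ _ (M.adj_symm (hadj e he)) h6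
      calc e = s(a e, b e) := hep e
        _ = s(b e', a e') := by rw [h5, hbb]
        _ = s(a e', b e') := Sym2.eq_swap
        _ = e' := (hep e').symm
    · have h6 : M.Adj (b e) (a e') := by rw [h5]; exact M.adj_symm (hadj e' he')
      have hbb : a e = a e' := huniq _ _ _ (M.adj_symm (hadj e he)) h6
      calc e = s(a e, b e) := hep e
        _ = s(a e', b e') := by rw [h5, hbb]
        _ = e' := (hep e').symm
  have hinja : InjOn a M.edgeSet := fun e he e' he' h =>
    hkey e he e' he' (a e) (Or.inl rfl) (Or.inl h)
  have hinjb : InjOn b M.edgeSet := fun e he e' he' h =>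
    hkey e he e' he' (b e) (Or.inr rfl) (Or.inr h)
  have hdisj : Disjoint (a '' M.edgeSet) (b '' M.edgeSet) := by
    rw [disjoint_left]
    rintro x ⟨e, he, rfl⟩ ⟨e', he', hbe⟩
    have : e = e' := hkey e he e' he' (a e) (Or.inl rfl) (Or.inr hbe.symm)
    exact hne e he (this ▸ hbe.symm)
  have hsubA : a '' M.edgeSet ⊆ M.verts := by
    rintro x ⟨e, he, rfl⟩; exact M.edge_vert (hadj e he)
  have hsubB : b '' M.edgeSet ⊆ M.verts := by
    rintro x ⟨e, he, rfl⟩; exact M.edge_vert (M.adj_symm (hadj e he))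
  calc 2 * M.edgeSet.ncard = (a '' M.edgeSet).ncard + (b '' M.edgeSet).ncard := by
        rw [ncard_image_of_injOn hinja, ncard_image_of_injOn hinjb]; ring
    _ = (a '' M.edgeSet ∪ b '' M.edgeSet).ncard :=
        (ncard_union_eq hdisj (toFinite _) (toFinite _)).symm
    _ ≤ M.verts.ncard := ncard_le_ncard (union_subset hsubA hsubB) (toFinite _)

lemma corona_core_le :
    (corona G).ncard + (core G).ncard ≤ 2 * (Fintype.card V - matchNum G) := by
  classical
  obtain ⟨M, hM, hMcard⟩ := exists_max_matching G
  set P := M.verts with hP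
  have hpart : ∀ v, ∃ w, (v ∈ P → M.Adj v w) := by
    intro v
    by_cases hv : v ∈ P
    · obtain ⟨w, hw⟩ := (hM hv).exists
      exact ⟨w, fun _ => hw⟩
    · exact ⟨v, fun h => absurd h hv⟩
  choose p hp using hpart
  have huniq : ∀ v w w', M.Adj v w → M.Adj v w' → w = w' := by
    intro v w w' h h'
    exact (hM (M.edge_vert h)).unique h h'
  have hpmem : ∀ v ∈ P, p v ∈ P := fun v hv => M.edge_vert (M.adj_symm (hp v hv))
  have hpinj : InjOn p P := by
    intro v hv v' hv' h
    have h1 : M.Adj (p v) v := M.adj_symm (hp v hv)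
    have h2 : M.Adj (p v) v' := by rw [h]; exact M.adj_symm (hp v' hv')
    exact huniq _ _ _ h1 h2
  have hAP : corona G ∩ P ⊆ P := inter_subset_right
  have hBP : p '' (core G ∩ P) ⊆ P := by rintro x ⟨v, ⟨hv1, hv2⟩, rfl⟩; exact hpmem v hv2
  have hdisj : Disjoint (corona G ∩ P) (p '' (core G ∩ P)) := by
    rw [disjoint_left]
    rintro x ⟨hxcor, hxP⟩ ⟨v, ⟨hv1, hv2⟩, rfl⟩
    exact no_adj_core_corona G hv1 hxcor (M.adj_sub (hp v hv2))
  have hBcard : (p '' (core G ∩ P)).ncard = (core G ∩ P).ncard :=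
    ncard_image_of_injOn (hpinj.mono inter_subset_right)
  have hK1 : (corona G ∩ P).ncard + (core G ∩ P).ncard ≤ P.ncard := by
    rw [← hBcard, ← ncard_union_eq hdisj (toFinite _) (toFinite _)]
    exact ncard_le_ncard (union_subset hAP hBP) (toFinite _)
  have hsplit1 : (corona G ∩ P).ncard + (corona G \ P).ncard = (corona G).ncard :=
    ncard_inter_add_ncard_diff_eq_ncard _ _ (toFinite _)
  have hsplit2 : (core G ∩ P).ncard + (core G \ P).ncard = (core G).ncard :=
    ncard_inter_add_ncard_diff_eq_ncard _ _ (toFinite _)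
  have hc2 : (corona G \ P).ncard ≤ ((univ : Set V) \ P).ncard :=
    ncard_le_ncard (diff_subset_diff_left (subset_univ _)) (toFinite _)
  have hd2 : (core G \ P).ncard ≤ ((univ : Set V) \ P).ncard :=
    ncard_le_ncard (diff_subset_diff_left (subset_univ _)) (toFinite _)
  have hPn : ((univ : Set V) \ P).ncard + P.ncard = Fintype.card V := by
    rw [ncard_diff_add_ncard_of_subset (subset_univ P) (toFinite _)]
    simp [ncard_univ, Nat.card_eq_fintype_card]
  have h2mu : 2 * matchNum G ≤ P.ncard := by
    rw [← hMcard]; exact two_mul_edges_le_verts G M hM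
  omega

end aux

theorem stmt_10 [Fintype V] (G : SimpleGraph V) :
    2 * alpha G ≤ (corona G).ncard + (core G).ncard ∧
      (corona G).ncard + (core G).ncard ≤ 2 * (Fintype.card V - matchNum G) :=
  ⟨two_alpha_le G, corona_core_le G⟩
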